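/- Let E be a separable Banach space, (X, ℬ, μ) a probability space, and let L_μ(𝓜(P)) denote the set of measurable maps from X to the space 𝓜(P) of positive Radon measures of mass ≤ 1 on a compact metric space P, viewed inside the unit ball of the dual of L¹_μ(C(P,ℝ)). Then L_μ(𝓜(P)) is compact in the weak-star topology of (L¹_μ(C(P,ℝ)))*. -/

import Mathlib

open MeasureTheory ENNReal Filter Topology Set

section Stmt18Aux

variable {X : Type*} [MeasurableSpace X] {μ : Measure X} [IsProbabilityMeasure μ]
  {P : Type*} [MetricSpace P] [CompactSpace P]

/-- Measurability of the pairing `x ↦ γ x (u x)`. -/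
lemma measPair (γ : X → C(P,ℝ) →L[ℝ] ℝ) (hm : ∀ f : C(P,ℝ), Measurable fun x => γ x f)
    {u : X → C(P,ℝ)} (hu : StronglyMeasurable u) : Measurable fun x => γ x (u x) := by
  have hs : ∀ s : SimpleFunc X C(P,ℝ), Measurable fun x => γ x (s x) := by
    intro s
    classical
    refine SimpleFunc.induction (fun c {A} hA => ?_) (fun f g _ hf hg => ?_) s
    · have h1 : (fun x => γ x ((SimpleFunc.piecewise A hA (SimpleFunc.const X c)
          (SimpleFunc.const X 0)) x)) = A.piecewise (fun x => γ x c) (fun x => γ x 0) := by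
        funext x
        by_cases hx : x ∈ A <;>
          simp [SimpleFunc.piecewise_apply, Set.piecewise, hx]
      rw [h1]
      exact Measurable.piecewise hA (hm c) (hm 0)
    · have h1 : (fun x => γ x ((f + g) x)) = fun x => γ x (f x) + γ x (g x) := by
        funext x; simp [map_add]
      rw [h1]; exact hf.add hg
  exact measurable_of_tendsto_metrizable (fun n => hs (hu.approx n))
    (tendsto_pi_nhds.2 fun x => ((γ x).continuous.tendsto _).comp (hu.tendsto_approx x))

lemma integrablePair (γ : X → C(P,ℝ) →L[ℝ] ℝ) (hm : ∀ f : C(P,ℝ), Measurable fun x => γ x f)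
    (hb : ∀ x, ‖γ x‖ ≤ 1) (g : Lp C(P,ℝ) 1 μ) : Integrable (fun x => γ x (g x)) μ := by
  refine Integrable.mono' (L1.integrable_coeFn g).norm
    ((measPair γ hm (Lp.stronglyMeasurable g)).aestronglyMeasurable) (ae_of_all _ fun x => ?_)
  calc ‖γ x (g x)‖ ≤ ‖γ x‖ * ‖(g : X → C(P,ℝ)) x‖ := (γ x).le_opNorm _
  _ ≤ 1 * ‖(g : X → C(P,ℝ)) x‖ := mul_le_mul_of_nonneg_right (hb x) (norm_nonneg _)
  _ = ‖(g : X → C(P,ℝ)) x‖ := one_mul _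

lemma absIntegralLe (γ : X → C(P,ℝ) →L[ℝ] ℝ) (hm : ∀ f : C(P,ℝ), Measurable fun x => γ x f)
    (hb : ∀ x, ‖γ x‖ ≤ 1) (g : Lp C(P,ℝ) 1 μ) : |∫ x, γ x (g x) ∂μ| ≤ ‖g‖ := by
  rw [L1.norm_eq_integral_norm (μ := μ) g]
  calc |∫ x, γ x (g x) ∂μ| ≤ ∫ x, ‖γ x (g x)‖ ∂μ := by
        exact (Real.norm_eq_abs _ ▸ norm_integral_le_integral_norm _)
  _ ≤ ∫ x, ‖(g : X → C(P,ℝ)) x‖ ∂μ := by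
      refine integral_mono (integrablePair γ hm hb g).norm (L1.integrable_coeFn g).norm fun x => ?_
      calc ‖γ x (g x)‖ ≤ ‖γ x‖ * ‖(g : X → C(P,ℝ)) x‖ := (γ x).le_opNorm _
      _ ≤ 1 * ‖(g : X → C(P,ℝ)) x‖ := mul_le_mul_of_nonneg_right (hb x) (norm_nonneg _)
      _ = ‖(g : X → C(P,ℝ)) x‖ := one_mul _

lemma lipPhi (γ : X → C(P,ℝ) →L[ℝ] ℝ) (hm : ∀ f : C(P,ℝ), Measurable fun x => γ x f)
    (hb : ∀ x, ‖γ x‖ ≤ 1) :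
    LipschitzWith 1 (fun g : Lp C(P,ℝ) 1 μ => ∫ x, γ x (g x) ∂μ) := by
  refine LipschitzWith.of_dist_le_mul fun g₁ g₂ => ?_
  rw [Real.dist_eq, NNReal.coe_one, one_mul, dist_eq_norm]
  have h1 : (fun x => γ x ((g₁ - g₂ : Lp C(P,ℝ) 1 μ) x))
      =ᵐ[μ] fun x => γ x (g₁ x) - γ x (g₂ x) := by
    filter_upwards [Lp.coeFn_sub g₁ g₂] with x hx
    rw [hx, Pi.sub_apply, map_sub]
  have h2 : ∫ x, γ x (g₁ x) ∂μ - ∫ x, γ x (g₂ x) ∂μ = ∫ x, γ x ((g₁ - g₂ : Lp C(P,ℝ) 1 μ) x) ∂μ := by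
    rw [integral_congr_ae h1, integral_sub (integrablePair γ hm hb g₁) (integrablePair γ hm hb g₂)]
  rw [h2]
  exact absIntegralLe γ hm hb _

open Classical in
/-- The indicator Lp element with constant value `f` on a set, as a total set function. -/
noncomputable def Jf (μ : Measure X) [IsProbabilityMeasure μ] (f : C(P,ℝ)) (A : Set X) :
    Lp C(P,ℝ) 1 μ :=
  if hA : MeasurableSet A then indicatorConstLp 1 hA (measure_ne_top μ A) f else 0

lemma Jf_meas (f : C(P,ℝ)) {A : Set X} (hA : MeasurableSet A) :
    Jf μ f A = indicatorConstLp 1 hA (measure_ne_top μ A) f := by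
  unfold Jf
  rw [dif_pos hA]

lemma Jf_empty (f : C(P,ℝ)) : Jf μ f (∅ : Set X) = 0 := by
  rw [Jf_meas f MeasurableSet.empty]
  exact indicatorConstLp_empty

lemma Jf_union (f : C(P,ℝ)) {A B : Set X} (hA : MeasurableSet A) (hB : MeasurableSet B)
    (hAB : Disjoint A B) : Jf μ f (A ∪ B) = Jf μ f A + Jf μ f B := by
  rw [Jf_meas f hA, Jf_meas f hB, Jf_meas f (hA.union hB)]
  exact indicatorConstLp_disjoint_union hA hB (measure_ne_top μ A) (measure_ne_top μ B) hAB f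

lemma norm_Jf_le (f : C(P,ℝ)) (A : Set X) : ‖Jf μ f A‖ ≤ ‖f‖ * (μ A).toReal := by
  by_cases hA : MeasurableSet A
  · rw [Jf_meas f hA, norm_indicatorConstLp one_ne_zero ENNReal.one_ne_top]
    simp
    exact le_rfl
  · unfold Jf
    rw [dif_neg hA, norm_zero]
    positivity

lemma Jf_add (f g : C(P,ℝ)) (A : Set X) : Jf μ (f + g) A = Jf μ f A + Jf μ g A := by
  by_cases hA : MeasurableSet A
  · rw [Jf_meas _ hA, Jf_meas _ hA, Jf_meas _ hA]
    exact indicatorConstLp_add.symm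
  · unfold Jf
    rw [dif_neg hA, dif_neg hA, dif_neg hA]
    simp

lemma Jf_sub (f g : C(P,ℝ)) (A : Set X) : Jf μ (f - g) A = Jf μ f A - Jf μ g A := by
  by_cases hA : MeasurableSet A
  · rw [Jf_meas _ hA, Jf_meas _ hA, Jf_meas _ hA]
    exact indicatorConstLp_sub.symm
  · unfold Jf
    rw [dif_neg hA, dif_neg hA, dif_neg hA]
    simp

lemma Jf_coeFn_nonneg (f : C(P,ℝ)) (hf : 0 ≤ f) (A : Set X) :
    ∀ᵐ x ∂μ, 0 ≤ (Jf μ f A : X → C(P,ℝ)) x := by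
  by_cases hA : MeasurableSet A
  · rw [Jf_meas f hA]
    filter_upwards [indicatorConstLp_coeFn (p := 1) (μ := μ) (c := f)] with x hx
    rw [hx]
    exact Set.indicator_nonneg (fun _ _ => hf) x
  · unfold Jf
    rw [dif_neg hA]
    filter_upwards [Lp.coeFn_zero C(P,ℝ) 1 μ] with x hx
    simp [hx]

lemma ae_le_of_forall_setIntegral_le {u : X → ℝ} {c : ℝ} (hu : Integrable u μ)
    (h : ∀ A, MeasurableSet A → ∫ x in A, u x ∂μ ≤ c * (μ A).toReal) : ∀ᵐ x ∂μ, u x ≤ c := by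
  have h0 := ae_nonneg_of_forall_setIntegral_nonneg ((integrable_const c).sub hu) (fun s hs _ => by
    simp only [Pi.sub_apply]
    rw [integral_sub (integrable_const c).integrableOn hu.integrableOn, setIntegral_const]
    have := h s hs
    simp only [smul_eq_mul]
    rw [measureReal_def]
    linarith)
  filter_upwards [h0] with x hx
  simpa using hx

/-- Radon–Nikodym step: a density for `A ↦ Λ (Jf μ f A)` when `0 ≤ f`. -/
lemma exists_density (Λ : Lp C(P,ℝ) 1 μ →L[ℝ] ℝ) (hnorm : ∀ g, |Λ g| ≤ ‖g‖)
    (hpos : ∀ g : Lp C(P,ℝ) 1 μ, (∀ᵐ x ∂μ, 0 ≤ (g : X → C(P,ℝ)) x) → 0 ≤ Λ g)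
    (f : C(P,ℝ)) (hf : 0 ≤ f) :
    ∃ h : X → ℝ, Measurable h ∧ Integrable h μ ∧
      ∀ A : Set X, MeasurableSet A → ∫ x in A, h x ∂μ = Λ (Jf μ f A) := by
  have hJpos : ∀ A : Set X, 0 ≤ Λ (Jf μ f A) := fun A => hpos _ (Jf_coeFn_nonneg f hf A)
  have hJle : ∀ A : Set X, Λ (Jf μ f A) ≤ ‖f‖ * (μ A).toReal :=
    fun A => (le_abs_self _).trans ((hnorm _).trans (norm_Jf_le f A))
  -- the measure
  have hm0 : ENNReal.ofReal (Λ (Jf μ f (∅ : Set X))) = 0 := by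
    rw [Jf_empty, map_zero, ENNReal.ofReal_zero]
  have hmU : ∀ ⦃g : ℕ → Set X⦄, (∀ i, MeasurableSet (g i)) → Pairwise (Function.onFun Disjoint g) →
      ENNReal.ofReal (Λ (Jf μ f (⋃ i, g i))) = ∑' i, ENNReal.ofReal (Λ (Jf μ f (g i))) := by
    intro g hgm hgd
    set a : ℕ → ℝ := fun i => Λ (Jf μ f (g i)) with ha
    have ha0 : ∀ i, 0 ≤ a i := fun i => hJpos _
    have hbU : ∀ n : ℕ, MeasurableSet (⋃ i ∈ Finset.range n, g i) :=
      fun n => MeasurableSet.biUnion (Finset.range n).countable_toSet (fun i _ => hgm i)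
    have hpart : ∀ n : ℕ, ∑ i ∈ Finset.range n, a i = Λ (Jf μ f (⋃ i ∈ Finset.range n, g i)) := by
      intro n
      induction n with
      | zero => simp [Jf_empty]
      | succ n ih =>
        have hdisj : Disjoint (g n) (⋃ i ∈ Finset.range n, g i) := by
          refine Set.disjoint_iUnion₂_right.2 fun i hi => ?_
          exact hgd (by intro he; rw [he] at hi; simp at hi)
        have hthis : (⋃ i ∈ Finset.range (n+1), g i) = g n ∪ ⋃ i ∈ Finset.range n, g i := by
          rw [Finset.range_add_one]
          exact Finset.set_biUnion_insert n (Finset.range n) g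
        rw [Finset.sum_range_succ, ih, hthis, Jf_union f (hgm n) (hbU n) hdisj, map_add]
        have han : a n = Λ (Jf μ f (g n)) := rfl
        rw [han]
        ring
    -- the difference sets
    set Dn : ℕ → Set X := fun n => (⋃ i, g i) \ ⋃ i ∈ Finset.range n, g i with hDn
    have hDm : ∀ n, MeasurableSet (Dn n) := fun n => (MeasurableSet.iUnion hgm).diff (hbU n)
    have hsplit : ∀ n, Jf μ f (⋃ i, g i) = Jf μ f (⋃ i ∈ Finset.range n, g i) + Jf μ f (Dn n) := by
      intro n
      rw [← Jf_union f (hbU n) (hDm n) disjoint_sdiff_right]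
      congr 1
      rw [Set.union_diff_self, Set.union_eq_self_of_subset_left]
      exact Set.iUnion₂_subset fun i _ => Set.subset_iUnion g i
    have hμD : Tendsto (fun n => μ (Dn n)) atTop (𝓝 0) := by
      have hiInter : ⋂ n, Dn n = ∅ := by
        refine Set.eq_empty_iff_forall_notMem.2 fun x hx => ?_
        have h1 := Set.mem_iInter.1 hx
        obtain ⟨i, hi⟩ := Set.mem_iUnion.1 (h1 0).1
        exact (h1 (i+1)).2 (Set.mem_iUnion₂.2 ⟨i, by simp, hi⟩)
      have := tendsto_measure_iInter_atTop (μ := μ) (fun n => (hDm n).nullMeasurableSet)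
        (fun m n hmn => Set.diff_subset_diff_right (Set.iUnion₂_subset fun i hi =>
          Set.subset_iUnion₂ (s := fun i (_ : i ∈ Finset.range n) => g i) i (Finset.range_subset_range.2 hmn hi)))
        ⟨0, measure_ne_top μ _⟩
      rw [hiInter] at this
      simpa [Function.comp_def] using this
    have htend : Tendsto (fun n => ∑ i ∈ Finset.range n, a i) atTop (𝓝 (Λ (Jf μ f (⋃ i, g i)))) := by
      simp only [hpart]
      have hdiff : ∀ n, ‖Λ (Jf μ f (⋃ i, g i)) - Λ (Jf μ f (⋃ i ∈ Finset.range n, g i))‖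
          ≤ ‖f‖ * (μ (Dn n)).toReal := by
        intro n
        rw [← map_sub]
        have : Jf μ f (⋃ i, g i) - Jf μ f (⋃ i ∈ Finset.range n, g i) = Jf μ f (Dn n) := by
          rw [hsplit n]; abel
        rw [this, Real.norm_eq_abs]
        exact (hnorm _).trans (norm_Jf_le f _)
      have hz : Tendsto (fun n => ‖f‖ * (μ (Dn n)).toReal) atTop (𝓝 0) := by
        have h1 : Tendsto (fun n => (μ (Dn n)).toReal) atTop (𝓝 0) := by
          have := (ENNReal.tendsto_toReal (by simp)).comp hμD
          simpa [Function.comp_def] using this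
        simpa using h1.const_mul ‖f‖
      have := squeeze_zero_norm hdiff hz
      have h2 : Tendsto (fun n => Λ (Jf μ f (⋃ i, g i))
          - (Λ (Jf μ f (⋃ i, g i)) - Λ (Jf μ f (⋃ i ∈ Finset.range n, g i)))) atTop
          (𝓝 (Λ (Jf μ f (⋃ i, g i)) - 0)) := (tendsto_const_nhds).sub this
      simpa using h2
    have hsum : HasSum a (Λ (Jf μ f (⋃ i, g i))) :=
      (hasSum_iff_tendsto_nat_of_nonneg ha0 _).2 htend
    rw [← hsum.tsum_eq, ENNReal.ofReal_tsum_of_nonneg ha0 hsum.summable]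
  set ν : Measure X := Measure.ofMeasurable (fun A _ => ENNReal.ofReal (Λ (Jf μ f A))) hm0 hmU
    with hν
  have hνA : ∀ A : Set X, MeasurableSet A → ν A = ENNReal.ofReal (Λ (Jf μ f A)) := by
    intro A hA
    exact Measure.ofMeasurable_apply A hA
  have hν_le : ∀ A : Set X, MeasurableSet A → ν A ≤ ENNReal.ofReal ‖f‖ * μ A := by
    intro A hA
    rw [hνA A hA]
    calc ENNReal.ofReal (Λ (Jf μ f A)) ≤ ENNReal.ofReal (‖f‖ * (μ A).toReal) :=
          ENNReal.ofReal_le_ofReal (hJle A)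
    _ = ENNReal.ofReal ‖f‖ * ENNReal.ofReal (μ A).toReal := ENNReal.ofReal_mul (norm_nonneg f)
    _ = ENNReal.ofReal ‖f‖ * μ A := by rw [ENNReal.ofReal_toReal (measure_ne_top μ A)]
  haveI : IsFiniteMeasure ν := by
    refine ⟨lt_of_le_of_lt (hν_le Set.univ MeasurableSet.univ) ?_⟩
    exact ENNReal.mul_lt_top ENNReal.ofReal_lt_top (measure_lt_top μ _)
  have hac : ν ≪ μ := by
    refine Measure.AbsolutelyContinuous.mk fun A hA hA0 => ?_
    have := hν_le A hA
    rw [hA0, mul_zero] at this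
    exact le_antisymm this zero_le
  refine ⟨fun x => (ν.rnDeriv μ x).toReal, (ν.measurable_rnDeriv μ).ennreal_toReal, ?_, ?_⟩
  · exact integrable_toReal_of_lintegral_ne_top (ν.measurable_rnDeriv μ).aemeasurable
      (Measure.lintegral_rnDeriv_lt_top ν μ).ne
  · intro A hA
    have h1 : ν A = ∫⁻ x in A, ν.rnDeriv μ x ∂μ := by
      conv_lhs => rw [← Measure.withDensity_rnDeriv_eq ν μ hac]
      rw [withDensity_apply _ hA]
    rw [integral_toReal ((ν.measurable_rnDeriv μ).aemeasurable.restrict)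
      (ae_restrict_of_ae (Measure.rnDeriv_lt_top ν μ)), ← h1, hνA A hA,
      ENNReal.toReal_ofReal (hJpos A)]

/-- Density for arbitrary `f`, via positive and negative parts. -/
lemma exists_density' (Λ : Lp C(P,ℝ) 1 μ →L[ℝ] ℝ) (hnorm : ∀ g, |Λ g| ≤ ‖g‖)
    (hpos : ∀ g : Lp C(P,ℝ) 1 μ, (∀ᵐ x ∂μ, 0 ≤ (g : X → C(P,ℝ)) x) → 0 ≤ Λ g)
    (f : C(P,ℝ)) :
    ∃ h : X → ℝ, Measurable h ∧ Integrable h μ ∧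
      ∀ A : Set X, MeasurableSet A → ∫ x in A, h x ∂μ = Λ (Jf μ f A) := by
  obtain ⟨h₁, hm₁, hi₁, hk₁⟩ := exists_density Λ hnorm hpos (f ⊔ 0) le_sup_right
  obtain ⟨h₂, hm₂, hi₂, hk₂⟩ := exists_density Λ hnorm hpos ((-f) ⊔ 0) le_sup_right
  have hsplit : (f ⊔ 0) - ((-f) ⊔ 0) = f := by
    ext p
    simp only [ContinuousMap.sub_apply, ContinuousMap.sup_apply, ContinuousMap.neg_apply,
      ContinuousMap.zero_apply]
    rcases le_total (f p) 0 with h | h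
    · rw [max_eq_right h, max_eq_left (by linarith)]; ring
    · rw [max_eq_left h, max_eq_right (by linarith)]; ring
  refine ⟨h₁ - h₂, hm₁.sub hm₂, hi₁.sub hi₂, fun A hA => ?_⟩
  have : ∫ x in A, (h₁ - h₂) x ∂μ = ∫ x in A, h₁ x ∂μ - ∫ x in A, h₂ x ∂μ := by
    simp only [Pi.sub_apply]
    exact integral_sub hi₁.integrableOn hi₂.integrableOn
  rw [this, hk₁ A hA, hk₂ A hA, ← map_sub, ← Jf_sub, hsplit]

lemma rep (Λ : WeakDual ℝ (Lp C(P,ℝ) 1 μ))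
    (hnorm : ∀ g : Lp C(P,ℝ) 1 μ, |Λ g| ≤ ‖g‖)
    (hpos : ∀ g : Lp C(P,ℝ) 1 μ, (∀ᵐ x ∂μ, 0 ≤ (g : X → C(P,ℝ)) x) → 0 ≤ Λ g) :
    ∃ γ : X → C(P, ℝ) →L[ℝ] ℝ,
      (∀ x, ∀ f : C(P, ℝ), 0 ≤ f → 0 ≤ γ x f) ∧
      (∀ x, ‖γ x‖ ≤ 1) ∧
      (∀ f : C(P, ℝ), Measurable fun x => γ x f) ∧
      ∀ g : Lp C(P, ℝ) 1 μ, Λ g = ∫ x, γ x (g x) ∂μ := by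
  classical
  set Λ' : Lp C(P,ℝ) 1 μ →L[ℝ] ℝ := WeakDual.toStrongDual Λ with hΛ'
  have hnorm' : ∀ g, |Λ' g| ≤ ‖g‖ := hnorm
  have hpos' : ∀ g : Lp C(P,ℝ) 1 μ, (∀ᵐ x ∂μ, 0 ≤ (g : X → C(P,ℝ)) x) → 0 ≤ Λ' g := hpos
  choose h hmeas hint hkey using fun f : C(P,ℝ) => exists_density' Λ' hnorm' hpos' f
  -- a.e. relations
  have hadd_ae : ∀ f g : C(P,ℝ), (fun x => h f x + h g x) =ᵐ[μ] h (f + g) := by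
    intro f g
    refine Integrable.ae_eq_of_forall_setIntegral_eq _ _ ((hint f).add (hint g)) (hint (f+g))
      fun A hA _ => ?_
    rw [hkey (f+g) A hA, Jf_add, map_add, ← hkey f A hA, ← hkey g A hA,
      integral_add (hint f).integrableOn (hint g).integrableOn]
  have hpos_ae : ∀ f : C(P,ℝ), 0 ≤ f → ∀ᵐ x ∂μ, 0 ≤ h f x := by
    intro f hf
    refine ae_nonneg_of_forall_setIntegral_nonneg (hint f) fun A hA _ => ?_
    rw [hkey f A hA]
    exact hpos' _ (Jf_coeFn_nonneg f hf A)
  have habs_ae : ∀ f : C(P,ℝ), ∀ᵐ x ∂μ, |h f x| ≤ ‖f‖ := by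
    intro f
    have h1 : ∀ᵐ x ∂μ, h f x ≤ ‖f‖ := by
      refine ae_le_of_forall_setIntegral_le (hint f) fun A hA => ?_
      rw [hkey f A hA]
      exact (le_abs_self _).trans ((hnorm' _).trans (norm_Jf_le f A))
    have h2 : ∀ᵐ x ∂μ, -(h f x) ≤ ‖f‖ := by
      refine ae_le_of_forall_setIntegral_le (μ := μ) (u := fun x => -(h f x)) (hint f).neg
        fun A hA => ?_
      rw [integral_neg, hkey f A hA]
      exact (neg_le_abs _).trans ((hnorm' _).trans (norm_Jf_le f A))
    filter_upwards [h1, h2] with x hx1 hx2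
    rw [abs_le]
    exact ⟨by linarith, hx1⟩
  -- countable dense subgroup
  obtain ⟨s, hsc, hsd⟩ := TopologicalSpace.exists_countable_dense C(P,ℝ)
  obtain ⟨e, he⟩ := (hsc.insert (1:C(P,ℝ))).exists_eq_range (Set.insert_nonempty _ _)
  obtain ⟨i₀, hi₀⟩ : ∃ i, e i = (1:C(P,ℝ)) := by
    have h1 : (1:C(P,ℝ)) ∈ Set.range e := he ▸ Set.mem_insert _ _
    obtain ⟨i, hi⟩ := h1
    exact ⟨i, hi⟩
  set F : (ℕ →₀ ℚ) → C(P,ℝ) := fun c => c.sum fun i q => (q:ℝ) • e i with hF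
  have hFadd : ∀ c d, F (c + d) = F c + F d := by
    intro c d
    refine Finsupp.sum_add_index' (fun i => ?_) (fun i q₁ q₂ => ?_)
    · simp
    · push_cast
      rw [add_smul]
  have hFzero : F 0 = 0 := Finsupp.sum_zero_index
  have hFsub : ∀ c d, F (c - d) = F c - F d := by
    intro c d
    have h1 := hFadd (c - d) d
    rw [sub_add_cancel] at h1
    exact eq_sub_of_add_eq h1.symm
  have hFsingle : ∀ (i : ℕ) (q : ℚ), F (Finsupp.single i q) = (q:ℝ) • e i := by
    intro i q
    rw [hF]
    exact Finsupp.sum_single_index (by simp)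
  set D : Set C(P,ℝ) := Set.range F with hD
  have hsub : s ⊆ D := by
    intro f hf
    have h1 : f ∈ Set.range e := he ▸ Set.mem_insert_of_mem _ hf
    obtain ⟨i, hi⟩ := h1
    exact ⟨Finsupp.single i 1, by rw [hFsingle]; simp [hi]⟩
  have hDdense : Dense D := hsd.mono hsub
  -- almost everywhere good points
  have hae : ∀ᵐ x ∂μ, (∀ c d : ℕ →₀ ℚ, h (F c) x + h (F d) x = h (F (c + d)) x) ∧
      (∀ c : ℕ →₀ ℚ, 0 ≤ F c → 0 ≤ h (F c) x) ∧ (∀ c : ℕ →₀ ℚ, |h (F c) x| ≤ ‖F c‖) := by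
    have H1 : ∀ᵐ x ∂μ, ∀ c d : ℕ →₀ ℚ, h (F c) x + h (F d) x = h (F (c + d)) x := by
      rw [ae_all_iff]
      intro c
      rw [ae_all_iff]
      intro d
      filter_upwards [hadd_ae (F c) (F d)] with x hx
      rw [hFadd]
      exact hx
    have H2 : ∀ᵐ x ∂μ, ∀ c : ℕ →₀ ℚ, 0 ≤ F c → 0 ≤ h (F c) x := by
      rw [ae_all_iff]
      intro c
      by_cases hc : 0 ≤ F c
      · filter_upwards [hpos_ae (F c) hc] with x hx _
        exact hx
      · filter_upwards with x hx
        exact absurd hx hc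
    have H3 : ∀ᵐ x ∂μ, ∀ c : ℕ →₀ ℚ, |h (F c) x| ≤ ‖F c‖ := ae_all_iff.2 fun c => habs_ae (F c)
    exact H1.and (H2.and H3)
  obtain ⟨t, hts, htm, htμ⟩ := exists_measurable_superset_of_null (ae_iff.1 hae)
  have hGood : ∀ x, x ∉ t → (∀ c d : ℕ →₀ ℚ, h (F c) x + h (F d) x = h (F (c + d)) x) ∧
      (∀ c : ℕ →₀ ℚ, 0 ≤ F c → 0 ≤ h (F c) x) ∧ (∀ c : ℕ →₀ ℚ, |h (F c) x| ≤ ‖F c‖) := by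
    intro x hx
    by_contra hcon
    exact hx (hts hcon)
  have hone : ‖(1:C(P,ℝ))‖ ≤ 1 := (ContinuousMap.norm_le _ zero_le_one).2 fun p => by simp
  -- pointwise construction of the functionals
  have hext : ∀ x : X, ∃ γx : C(P,ℝ) →L[ℝ] ℝ,
      (x ∉ t → ∀ c : ℕ →₀ ℚ, γx (F c) = h (F c) x) ∧ (x ∈ t → γx = 0) ∧ ‖γx‖ ≤ 1 ∧
      ∀ f : C(P,ℝ), 0 ≤ f → 0 ≤ γx f := by
    intro x
    by_cases hx : x ∈ t
    · exact ⟨0, fun hx' => absurd hx hx', fun _ => rfl, ContinuousLinearMap.opNorm_le_bound 0 zero_le_one (fun v => by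
        rw [ContinuousLinearMap.zero_apply, norm_zero, one_mul]
        exact norm_nonneg v), fun f _ => le_refl 0⟩
    · obtain ⟨Hadd, Hpos, Hbd⟩ := hGood x hx
      have hsub2 : ∀ c₁ c₂ : ℕ →₀ ℚ, h (F c₁) x - h (F c₂) x = h (F (c₁ - c₂)) x := by
        intro c₁ c₂
        have h1 := Hadd (c₁ - c₂) c₂
        rw [sub_add_cancel] at h1
        linarith
      have hlipD : LipschitzOnWith 1 (fun d => h d x) D := by
        rw [lipschitzOnWith_iff_restrict]
        refine LipschitzWith.of_dist_le_mul fun d₁ d₂ => ?_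
        obtain ⟨c₁, hc₁⟩ := d₁.2
        obtain ⟨c₂, hc₂⟩ := d₂.2
        rw [NNReal.coe_one, one_mul, Set.restrict_apply, Set.restrict_apply, Subtype.dist_eq,
          ← hc₁, ← hc₂, Real.dist_eq, hsub2 c₁ c₂, dist_eq_norm, ← hFsub]
        exact Hbd (c₁ - c₂)
      obtain ⟨ext, hlipext, heq⟩ := hlipD.extend_real
      have haddext : ∀ a b : C(P,ℝ), ext (a + b) = ext a + ext b := by
        have h1 : (fun p : C(P,ℝ) × C(P,ℝ) => ext (p.1 + p.2))
            = fun p : C(P,ℝ) × C(P,ℝ) => ext p.1 + ext p.2 := by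
          refine Continuous.ext_on (hDdense.prod hDdense) ?_ ?_ ?_
          · exact hlipext.continuous.comp continuous_add
          · exact ((hlipext.continuous.comp continuous_fst).add
              (hlipext.continuous.comp continuous_snd))
          · rintro ⟨a, b⟩ ⟨⟨c₁, rfl⟩, ⟨c₂, rfl⟩⟩
            have e1 : ext (F c₁ + F c₂) = h (F (c₁ + c₂)) x := by
              rw [← hFadd]
              exact (heq ⟨c₁ + c₂, rfl⟩).symm
            have e2 : ext (F c₁) = h (F c₁) x := (heq ⟨c₁, rfl⟩).symm
            have e3 : ext (F c₂) = h (F c₂) x := (heq ⟨c₂, rfl⟩).symm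
            show ext (F c₁ + F c₂) = ext (F c₁) + ext (F c₂)
            rw [e1, e2, e3, ← Hadd c₁ c₂]
        intro a b
        exact congrFun h1 (a, b)
      have hz : ext 0 = 0 := by
        have e0 : ext 0 = h (F 0) x := by
          have h1 := (heq ⟨0, rfl⟩).symm
          rwa [hFzero] at h1
        have h00 := Hadd 0 0
        rw [add_zero] at h00
        rw [e0]
        linarith
      set γx : C(P,ℝ) →L[ℝ] ℝ :=
        AddMonoidHom.toRealLinearMap (AddMonoidHom.mk' ext haddext) hlipext.continuous with hγx
      have hγxapp : ∀ v, γx v = ext v := fun v => rfl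
      refine ⟨γx, fun _ c => ?_, fun hx' => absurd hx' hx, ?_, ?_⟩
      · rw [hγxapp]
        exact (heq ⟨c, rfl⟩).symm
      · refine γx.opNorm_le_bound zero_le_one fun v => ?_
        rw [one_mul, hγxapp]
        have h2 := hlipext.dist_le_mul v 0
        rw [NNReal.coe_one, one_mul, Real.dist_eq, hz, sub_zero, dist_zero_right] at h2
        simpa using h2
      · intro f hf
        rw [hγxapp]
        by_contra hneg
        push_neg at hneg
        set ε : ℝ := -ext f / 4 with hε
        have hε0 : 0 < ε := by
          rw [hε]
          linarith
        obtain ⟨d, hdD, hdist⟩ := hDdense.exists_dist_lt f hε0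
        obtain ⟨c, rfl⟩ := hdD
        obtain ⟨q, hq1, hq2⟩ := exists_rat_btwn (show ε < 2*ε by linarith)
        have hqpos : (0:ℝ) < q := lt_trans hε0 hq1
        have hd' : (0:C(P,ℝ)) ≤ F c + (q:ℝ) • (1:C(P,ℝ)) := by
          rw [ContinuousMap.le_def]
          intro p
          have hfd : dist (f p) (F c p) ≤ dist f (F c) := ContinuousMap.dist_apply_le_dist p
          have hfp : 0 ≤ f p := hf p
          rw [Real.dist_eq] at hfd
          obtain ⟨hl, hr⟩ := abs_le.1 hfd
          simp only [ContinuousMap.add_apply, ContinuousMap.smul_apply, ContinuousMap.one_apply,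
            ContinuousMap.zero_apply, smul_eq_mul, mul_one]
          linarith [hdist, hq1]
        have hFc' : F (c + Finsupp.single i₀ q) = F c + (q:ℝ) • (1:C(P,ℝ)) := by
          rw [hFadd, hFsingle, hi₀]
        have hnn := Hpos (c + Finsupp.single i₀ q) (by rw [hFc']; exact hd')
        have hsum := Hadd c (Finsupp.single i₀ q)
        have hsingle : |h (F (Finsupp.single i₀ q)) x| ≤ (q:ℝ) := by
          refine (Hbd _).trans ?_
          rw [hFsingle, hi₀]
          refine (norm_smul_le (q:ℝ) (1:C(P,ℝ))).trans ?_
          calc ‖(q:ℝ)‖ * ‖(1:C(P,ℝ))‖ ≤ ‖(q:ℝ)‖ * 1 :=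
                mul_le_mul_of_nonneg_left hone (norm_nonneg _)
          _ = |(q:ℝ)| := by rw [mul_one, Real.norm_eq_abs]
          _ = (q:ℝ) := abs_of_pos hqpos
        have h5 : -(2*ε) ≤ h (F c) x := by
          have h51 := abs_le.1 hsingle
          linarith [hnn, hsum]
        have h6 : |ext f - ext (F c)| ≤ dist f (F c) := by
          have h7 := hlipext.dist_le_mul f (F c)
          rw [NNReal.coe_one, one_mul, Real.dist_eq] at h7
          exact h7
        have h7 : ext (F c) = h (F c) x := (heq ⟨c, rfl⟩).symm
        have h8 := abs_le.1 h6
        have h9 : ext f = -(4*ε) := by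
          rw [hε]
          ring
        linarith [hdist]
  choose γ hγD hγt hγnorm hγpos using hext
  -- measurability
  have hmeasD : ∀ c : ℕ →₀ ℚ, Measurable fun x => γ x (F c) := by
    intro c
    have h1 : (fun x => γ x (F c)) = fun x => Set.indicator tᶜ (fun y => h (F c) y) x := by
      funext x
      by_cases hx : x ∈ t
      · rw [Set.indicator_of_notMem (by simpa using hx), hγt x hx]
        rfl
      · rw [Set.indicator_of_mem (by simpa using hx), hγD x hx c]
    rw [h1]
    exact Measurable.indicator (hmeas (F c)) htm.compl
  have hmeasAll : ∀ f : C(P,ℝ), Measurable fun x => γ x f := by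
    intro f
    have hseq : ∀ n : ℕ, ∃ c : ℕ →₀ ℚ, dist f (F c) < 1/(n+1) := by
      intro n
      obtain ⟨d, hdD, hdist⟩ := hDdense.exists_dist_lt f (show (0:ℝ) < 1/(n+1) by positivity)
      obtain ⟨c, rfl⟩ := hdD
      exact ⟨c, hdist⟩
    choose cs hcs using hseq
    have htend : Tendsto (fun n => F (cs n)) atTop (𝓝 f) := by
      refine tendsto_iff_dist_tendsto_zero.2 ?_
      refine squeeze_zero (g := fun n : ℕ => 1/((n:ℝ)+1)) (fun n => dist_nonneg) (fun n => ?_) ?_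
      · rw [dist_comm]
        exact (hcs n).le
      · exact tendsto_one_div_add_atTop_nhds_zero_nat
    exact measurable_of_tendsto_metrizable (fun n => hmeasD (cs n))
      (tendsto_pi_nhds.2 fun x => ((γ x).continuous.tendsto f).comp htend)
  have hIf : ∀ f : C(P,ℝ), Integrable (fun x => γ x f) μ := by
    intro f
    refine Integrable.mono' (integrable_const ‖f‖) (hmeasAll f).aestronglyMeasurable
      (ae_of_all _ fun x => ?_)
    calc ‖γ x f‖ ≤ ‖γ x‖ * ‖f‖ := (γ x).le_opNorm f
    _ ≤ 1 * ‖f‖ := mul_le_mul_of_nonneg_right (hγnorm x) (norm_nonneg f)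
    _ = ‖f‖ := one_mul _
  -- set-integral identity for all f
  have key2 : ∀ (A : Set X), MeasurableSet A → ∀ f : C(P,ℝ),
      ∫ x in A, γ x f ∂μ = Λ' (Jf μ f A) := by
    intro A hA
    have hμA : (μ A).toReal ≤ 1 := by
      have h1 : μ A ≤ 1 := prob_le_one
      calc (μ A).toReal ≤ (1:ℝ≥0∞).toReal := ENNReal.toReal_mono ENNReal.one_ne_top h1
      _ = 1 := ENNReal.toReal_one
    have hc1 : LipschitzWith 1 (fun f : C(P,ℝ) => ∫ x in A, γ x f ∂μ) := by
      refine LipschitzWith.of_dist_le_mul fun f₁ f₂ => ?_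
      rw [Real.dist_eq, NNReal.coe_one, one_mul, dist_eq_norm]
      have hsub : ∫ x in A, γ x f₁ ∂μ - ∫ x in A, γ x f₂ ∂μ = ∫ x in A, γ x (f₁ - f₂) ∂μ := by
        rw [← integral_sub (hIf f₁).integrableOn (hIf f₂).integrableOn]
        exact integral_congr_ae (ae_of_all _ fun x => (map_sub (γ x) f₁ f₂).symm)
      rw [hsub, ← Real.norm_eq_abs]
      calc ‖∫ x in A, γ x (f₁ - f₂) ∂μ‖ ≤ ‖f₁ - f₂‖ * (μ A).toReal := by
            refine norm_setIntegral_le_of_norm_le_const (measure_lt_top μ A) fun x _ => ?_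
            calc ‖γ x (f₁ - f₂)‖ ≤ ‖γ x‖ * ‖f₁ - f₂‖ := (γ x).le_opNorm _
            _ ≤ 1 * ‖f₁ - f₂‖ := mul_le_mul_of_nonneg_right (hγnorm x) (norm_nonneg _)
            _ = ‖f₁ - f₂‖ := one_mul _
      _ ≤ ‖f₁ - f₂‖ * 1 := mul_le_mul_of_nonneg_left hμA (norm_nonneg _)
      _ = ‖f₁ - f₂‖ := mul_one _
    have hc2 : LipschitzWith 1 (fun f : C(P,ℝ) => Λ' (Jf μ f A)) := by
      refine LipschitzWith.of_dist_le_mul fun f₁ f₂ => ?_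
      rw [Real.dist_eq, NNReal.coe_one, one_mul, dist_eq_norm, ← map_sub, ← Jf_sub]
      refine (hnorm' _).trans ((norm_Jf_le _ A).trans ?_)
      calc ‖f₁ - f₂‖ * (μ A).toReal ≤ ‖f₁ - f₂‖ * 1 :=
            mul_le_mul_of_nonneg_left hμA (norm_nonneg _)
      _ = ‖f₁ - f₂‖ := mul_one _
    have heqfun : (fun f : C(P,ℝ) => ∫ x in A, γ x f ∂μ) = fun f : C(P,ℝ) => Λ' (Jf μ f A) := by
      refine Continuous.ext_on hDdense hc1.continuous hc2.continuous ?_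
      rintro d ⟨c, rfl⟩
      show ∫ x in A, γ x (F c) ∂μ = Λ' (Jf μ (F c) A)
      have hT : ∀ᵐ x ∂μ, x ∉ t := by
        have hset : {x | ¬ x ∉ t} = t := by
          ext y
          simp [not_not]
        rw [ae_iff, hset]
        exact htμ
      have hae' : ∀ᵐ x ∂μ, x ∈ A → γ x (F c) = h (F c) x := by
        filter_upwards [hT] with x hx _
        exact hγD x hx c
      rw [setIntegral_congr_ae hA hae', hkey (F c) A hA]
    exact fun f => congrFun heqfun f
  -- conclusion
  refine ⟨γ, hγpos, hγnorm, hmeasAll, ?_⟩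
  haveI hFact : Fact ((1:ℝ≥0∞) ≤ 1) := ⟨le_rfl⟩
  refine Lp.induction (μ := μ) (E := C(P,ℝ)) ENNReal.one_ne_top
    (fun g : Lp C(P,ℝ) 1 μ => Λ g = ∫ x, γ x (g x) ∂μ) ?_ ?_ ?_
  · intro c A hA hμA
    rw [Lp.simpleFunc.coe_indicatorConst]
    have h1 : (fun x => γ x ((indicatorConstLp 1 hA hμA.ne c : Lp C(P,ℝ) 1 μ) x))
        =ᵐ[μ] fun x => Set.indicator A (fun y => γ y c) x := by
      filter_upwards [indicatorConstLp_coeFn (p := 1) (μ := μ) (c := c) (hs := hA)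
        (hμs := hμA.ne)] with x hx
      rw [hx]
      by_cases hxA : x ∈ A
      · rw [Set.indicator_of_mem hxA, Set.indicator_of_mem hxA]
      · rw [Set.indicator_of_notMem hxA, Set.indicator_of_notMem hxA, map_zero]
    rw [integral_congr_ae h1, integral_indicator hA, key2 A hA c, Jf_meas c hA]
    rfl
  · intro f g hf hg hdisj hPf hPg
    rw [map_add]
    have h1 : (fun x => γ x ((hf.toLp f + hg.toLp g : Lp C(P,ℝ) 1 μ) x))
        =ᵐ[μ] fun x => γ x ((hf.toLp f : Lp C(P,ℝ) 1 μ) x) + γ x ((hg.toLp g : Lp C(P,ℝ) 1 μ) x) := by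
      filter_upwards [Lp.coeFn_add (hf.toLp f) (hg.toLp g)] with x hx
      rw [hx, Pi.add_apply, map_add]
    rw [integral_congr_ae h1, integral_add (integrablePair γ hmeasAll hγnorm _)
      (integrablePair γ hmeasAll hγnorm _), hPf, hPg]
  · exact isClosed_eq Λ'.continuous (lipPhi γ hmeasAll hγnorm).continuous

end Stmt18Aux

open MeasureTheory

theorem stmt18 {X : Type*} [MeasurableSpace X] (μ : Measure X) [IsProbabilityMeasure μ]
    (P : Type*) [MetricSpace P] [CompactSpace P] :
    IsCompact {Λ : WeakDual ℝ (Lp C(P, ℝ) 1 μ) |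
      ∃ γ : X → C(P, ℝ) →L[ℝ] ℝ,
        (∀ x, ∀ f : C(P, ℝ), 0 ≤ f → 0 ≤ γ x f) ∧
        (∀ x, ‖γ x‖ ≤ 1) ∧
        (∀ f : C(P, ℝ), Measurable fun x => γ x f) ∧
        ∀ g : Lp C(P, ℝ) 1 μ, Λ g = ∫ x, γ x (g x) ∂μ} := by
  classical
  have hset : {Λ : WeakDual ℝ (Lp C(P, ℝ) 1 μ) |
      ∃ γ : X → C(P, ℝ) →L[ℝ] ℝ,
        (∀ x, ∀ f : C(P, ℝ), 0 ≤ f → 0 ≤ γ x f) ∧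
        (∀ x, ‖γ x‖ ≤ 1) ∧
        (∀ f : C(P, ℝ), Measurable fun x => γ x f) ∧
        ∀ g : Lp C(P, ℝ) 1 μ, Λ g = ∫ x, γ x (g x) ∂μ}
      = (WeakDual.toStrongDual ⁻¹' Metric.closedBall (0 : StrongDual ℝ (Lp C(P,ℝ) 1 μ)) 1) ∩
        {Λ : WeakDual ℝ (Lp C(P, ℝ) 1 μ) |
          ∀ g : Lp C(P,ℝ) 1 μ, (∀ᵐ x ∂μ, 0 ≤ (g : X → C(P,ℝ)) x) → 0 ≤ Λ g} := by
    ext Λ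
    constructor
    · rintro ⟨γ, hγpos, hγnorm, hγmeas, hγeq⟩
      constructor
      · refine (mem_closedBall_zero_iff (a := WeakDual.toStrongDual Λ) (r := 1)).2 ?_
        refine ContinuousLinearMap.opNorm_le_bound _ zero_le_one fun g => ?_
        rw [one_mul]
        calc ‖WeakDual.toStrongDual Λ g‖ = |Λ g| := rfl
        _ = |∫ x, γ x (g x) ∂μ| := by rw [hγeq]
        _ ≤ ‖g‖ := absIntegralLe γ hγmeas hγnorm g
      · intro g hg
        rw [hγeq]
        refine integral_nonneg_of_ae ?_
        filter_upwards [hg] with x hx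
        exact hγpos x _ hx
    · rintro ⟨h1, h2⟩
      have hnorm : ∀ g : Lp C(P,ℝ) 1 μ, |Λ g| ≤ ‖g‖ := by
        intro g
        have hb : ‖WeakDual.toStrongDual Λ‖ ≤ 1 := by
          simp only [Set.mem_preimage, mem_closedBall_zero_iff] at h1
          exact (mem_closedBall_zero_iff (a := WeakDual.toStrongDual Λ) (r := 1)).1 h1
        calc |Λ g| = ‖WeakDual.toStrongDual Λ g‖ := rfl
        _ ≤ ‖WeakDual.toStrongDual Λ‖ * ‖g‖ := (WeakDual.toStrongDual Λ).le_opNorm g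
        _ ≤ 1 * ‖g‖ := mul_le_mul_of_nonneg_right hb (norm_nonneg _)
        _ = ‖g‖ := one_mul _
      exact rep Λ hnorm h2
  rw [hset]
  refine (WeakDual.isCompact_closedBall (𝕜 := ℝ) (E := Lp C(P,ℝ) 1 μ) 0 1).inter_right ?_
  have hset2 : {Λ : WeakDual ℝ (Lp C(P, ℝ) 1 μ) |
      ∀ g : Lp C(P,ℝ) 1 μ, (∀ᵐ x ∂μ, 0 ≤ (g : X → C(P,ℝ)) x) → 0 ≤ Λ g}
      = ⋂ (g : Lp C(P,ℝ) 1 μ) (_ : ∀ᵐ x ∂μ, 0 ≤ (g : X → C(P,ℝ)) x),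
          {Λ : WeakDual ℝ (Lp C(P, ℝ) 1 μ) | 0 ≤ Λ g} := by
    ext Λ
    simp only [Set.mem_setOf_eq, Set.mem_iInter]
  rw [hset2]
  exact isClosed_iInter fun g => isClosed_iInter fun _ =>
    isClosed_le continuous_const (WeakDual.eval_continuous g)
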